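/- Let s ≥ 1, b ∈ {0,…,s−1}, and N_t = s(n−τ)−t(k−1). Suppose Q^(b),…,Q^(ℓ) ∈ F[x] with deg Q^(t) < N_t and B^(b) ∈ F[x] with deg B^(b) < ℓ(n−k)−sτ+b satisfy Σ_{t=b}^{ℓ} C(t,b)·Q^(t)(x)·R(x)^{t−b} = B^(b)(x)·G(x)^{s−b}. Define the reciprocals Λ^(t)(x) = x^{N_t−1}·Q^(t)(1/x), B̄^(b)(x) = x^{ℓ(n−k)−sτ+b−1}·B^(b)(1/x), R̄(x) = x^{n−1}·R(1/x) and Ḡ(x) = x^n·G(1/x). Then the exact polynomial identity Σ_{t=b}^{ℓ} C(t,b)·Λ^(t)(x)·x^{(ℓ−t)(n−k)}·R̄(x)^{t−b} = B̄^(b)(x)·Ḡ(x)^{s−b} holds, where C(t,b) denotes the binomial coefficient (reduced in F). -/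

import Mathlib

open Polynomial

private lemma gs_reflect_sum {R : Type*} [Semiring R] {ι : Type*} (s : Finset ι)
    (f : ι → R[X]) (N : ℕ) :
    (∑ i ∈ s, f i).reflect N = ∑ i ∈ s, (f i).reflect N := by
  classical
  induction s using Finset.induction with
  | empty => simp
  | insert a s h ih => simp [Finset.sum_insert h, ih]

private lemma gs_reflect_pow {R : Type*} [CommSemiring R] (p : R[X]) {N : ℕ}
    (hp : p.natDegree ≤ N) (m : ℕ) :
    (p ^ m).reflect (m * N) = (p.reflect N) ^ m := by
  induction m with
  | zero => simp
  | succ m ih =>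
      have h1 : (p ^ m).natDegree ≤ m * N :=
        natDegree_pow_le.trans (by nlinarith)
      rw [pow_succ, Nat.succ_mul, reflect_mul _ _ h1 hp, ih, pow_succ]

private lemma gs_arith1 (n k s ℓ τ b t t0 : ℕ) (hk : 1 ≤ k) (hkn : k ≤ n) (hτ : τ < n)
    (hbt0 : b ≤ t0) (ht0l : t0 ≤ ℓ) (hbt : b ≤ t) (htl : t ≤ ℓ)
    (hN0 : 1 ≤ s * (n - τ) - t0 * (k - 1)) (hNt : 1 ≤ s * (n - τ) - t * (k - 1)) :
    (ℓ - t0) * (n - k) + ((s * (n - τ) - t0 * (k - 1) - 1) + (t0 - b) * (n - 1)) =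
      (ℓ - t) * (n - k) + ((s * (n - τ) - t * (k - 1) - 1) + (t - b) * (n - 1)) := by
  have e1 : t0 * (k - 1) ≤ s * (n - τ) := le_of_lt (Nat.lt_of_sub_pos hN0)
  have e2 : t * (k - 1) ≤ s * (n - τ) := le_of_lt (Nat.lt_of_sub_pos hNt)
  have hn : 1 ≤ n := hk.trans hkn
  zify [e1, e2, hkn, hτ.le, hk, hbt, hbt0, htl, ht0l, hN0, hNt, hn]
  ring

private lemma gs_arith2 (n k s ℓ τ b t0 : ℕ) (hk : 1 ≤ k) (hkn : k ≤ n) (hτ : τ < n)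
    (hb : b < s) (hbt0 : b ≤ t0) (ht0l : t0 ≤ ℓ)
    (hN0 : 1 ≤ s * (n - τ) - t0 * (k - 1))
    (hd1 : 1 ≤ ℓ * (n - k) + b - s * τ) :
    (ℓ - t0) * (n - k) + ((s * (n - τ) - t0 * (k - 1) - 1) + (t0 - b) * (n - 1)) =
      (ℓ * (n - k) + b - s * τ - 1) + (s - b) * n := by
  have e1 : t0 * (k - 1) ≤ s * (n - τ) := le_of_lt (Nat.lt_of_sub_pos hN0)
  have e3 : s * τ ≤ ℓ * (n - k) + b := le_of_lt (Nat.lt_of_sub_pos hd1)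
  have hn : 1 ≤ n := hk.trans hkn
  zify [e1, e3, hkn, hτ.le, hk, hbt0, ht0l, hN0, hd1, hn, hb.le]
  ring

theorem guruswami_sudan_reversed_identity
    (F : Type*) [Field F] (n k s ℓ τ b : ℕ) (hk : 1 ≤ k) (hkn : k ≤ n)
    (hs : 1 ≤ s) (hb : b < s)
    (α υ' : Fin n → F) (hα : Function.Injective α) (hα0 : ∀ i, α i ≠ 0)
    (hυ' : ∀ i, υ' i ≠ 0)
    (r : Fin n → F)
    (G : F[X]) (hG : G = ∏ i, (X - C (α i)))
    (R : F[X]) (hRdeg : R.degree < (n : ℕ))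
    (hR : ∀ i, R.eval (α i) = r i / υ' i)
    (Q : ℕ → F[X])
    (hQd : ∀ t, b ≤ t → t ≤ ℓ →
      (Q t).degree < ((s * (n - τ) - t * (k - 1) : ℕ) : WithBot ℕ))
    (B : F[X])
    (hdB : B.degree < ((ℓ * (n - k) + b - s * τ : ℕ) : WithBot ℕ))
    (heq : ∑ t ∈ Finset.Icc b ℓ, (t.choose b : F[X]) * Q t * R ^ (t - b) =
      B * G ^ (s - b)) :
    ∑ t ∈ Finset.Icc b ℓ,
        (t.choose b : F[X]) * (Q t).reflect (s * (n - τ) - t * (k - 1) - 1) *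
          X ^ ((ℓ - t) * (n - k)) * (R.reflect (n - 1)) ^ (t - b) =
      B.reflect (ℓ * (n - k) + b - s * τ - 1) * (G.reflect n) ^ (s - b) := by
  have hGmonic : G.Monic := by
    rw [hG]; exact monic_prod_of_monic _ _ fun i _ => monic_X_sub_C _
  have hGdeg : G.natDegree = n := by
    rw [hG, natDegree_prod_of_monic _ _ fun i _ => monic_X_sub_C _]
    simp
  have hGne : G ≠ 0 := hGmonic.ne_zero
  have hRnd : R.natDegree ≤ n - 1 := by
    rcases eq_or_ne R 0 with h | h
    · simp [h]
    · have := (natDegree_lt_iff_degree_lt h).mpr hRdeg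
      omega
  by_cases hQall : ∀ t ∈ Finset.Icc b ℓ, Q t = 0
  · have hsum0 : ∑ t ∈ Finset.Icc b ℓ, (t.choose b : F[X]) * Q t * R ^ (t - b) = 0 :=
      Finset.sum_eq_zero fun t ht => by rw [hQall t ht, mul_zero, zero_mul]
    have hB0 : B = 0 := by
      rcases mul_eq_zero.mp (hsum0 ▸ heq.symm) with h | h
      · exact h
      · exact absurd h (pow_ne_zero _ hGne)
    rw [hB0, reflect_zero, zero_mul]
    exact Finset.sum_eq_zero fun t ht => by
      rw [hQall t ht, reflect_zero, mul_zero, zero_mul, zero_mul]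
  · push_neg at hQall
    obtain ⟨t0, ht0, hQt0⟩ := hQall
    rw [Finset.mem_Icc] at ht0
    have hN0 : 1 ≤ s * (n - τ) - t0 * (k - 1) := by
      have := (natDegree_lt_iff_degree_lt hQt0).mpr (hQd t0 ht0.1 ht0.2)
      omega
    have hτ : τ < n := by
      rcases Nat.lt_or_ge τ n with h | h
      · exact h
      · rw [Nat.sub_eq_zero_of_le h, Nat.mul_zero, Nat.zero_sub] at hN0; omega
    set D : ℕ := (ℓ - t0) * (n - k) + ((s * (n - τ) - t0 * (k - 1) - 1) +
      (t0 - b) * (n - 1)) with hD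
    have key := congrArg (reflect D) heq
    rw [gs_reflect_sum] at key
    -- left side
    have hL : ∀ t ∈ Finset.Icc b ℓ,
        ((t.choose b : F[X]) * Q t * R ^ (t - b)).reflect D =
          (t.choose b : F[X]) * (Q t).reflect (s * (n - τ) - t * (k - 1) - 1) *
            X ^ ((ℓ - t) * (n - k)) * (R.reflect (n - 1)) ^ (t - b) := by
      intro t ht
      rw [Finset.mem_Icc] at ht
      by_cases hQt : Q t = 0
      · simp [hQt]
      · have hNt : 1 ≤ s * (n - τ) - t * (k - 1) := by
          have := (natDegree_lt_iff_degree_lt hQt).mpr (hQd t ht.1 ht.2)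
          omega
        have hQnd : (Q t).natDegree ≤ s * (n - τ) - t * (k - 1) - 1 := by
          have := (natDegree_lt_iff_degree_lt hQt).mpr (hQd t ht.1 ht.2)
          omega
        have hRp : (R ^ (t - b)).natDegree ≤ (t - b) * (n - 1) :=
          natDegree_pow_le.trans (Nat.mul_le_mul_left _ hRnd)
        have hprod : (Q t * R ^ (t - b)).natDegree ≤
            (s * (n - τ) - t * (k - 1) - 1) + (t - b) * (n - 1) :=
          natDegree_mul_le.trans (Nat.add_le_add hQnd hRp)
        have hDeq : D = (ℓ - t) * (n - k) + ((s * (n - τ) - t * (k - 1) - 1) +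
            (t - b) * (n - 1)) :=
          gs_arith1 n k s ℓ τ b t t0 hk hkn hτ ht0.1 ht0.2 ht.1 ht.2 hN0 hNt
        have hC : (C ((t.choose b : ℕ) : F)).natDegree ≤ (ℓ - t) * (n - k) := by
          simp
        rw [← C_eq_natCast, mul_assoc, hDeq,
          reflect_mul (C _) (Q t * R ^ (t - b)) hC hprod,
          reflect_mul (Q t) (R ^ (t - b)) hQnd hRp,
          gs_reflect_pow R hRnd (t - b), reflect_C]
        ring
    rw [Finset.sum_congr rfl hL] at key
    rw [key]
    -- right side
    by_cases hB : B = 0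
    · rw [hB, reflect_zero, zero_mul, zero_mul, reflect_zero]
    · have hd1 : 1 ≤ ℓ * (n - k) + b - s * τ := by
        have := (natDegree_lt_iff_degree_lt hB).mpr hdB
        omega
      have hBnd : B.natDegree ≤ ℓ * (n - k) + b - s * τ - 1 := by
        have := (natDegree_lt_iff_degree_lt hB).mpr hdB
        omega
      have hGp : (G ^ (s - b)).natDegree ≤ (s - b) * n :=
        natDegree_pow_le.trans (by rw [hGdeg])
      have hDeq : D = (ℓ * (n - k) + b - s * τ - 1) + (s - b) * n :=
        gs_arith2 n k s ℓ τ b t0 hk hkn hτ hb ht0.1 ht0.2 hN0 hd1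
      rw [hDeq, reflect_mul B (G ^ (s - b)) hBnd hGp,
        gs_reflect_pow G hGdeg.le (s - b)]
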